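/- Let W be a graph on vertex set {1,...,n} and F a graph on a vertex set N_F ⊆ {1,...,n}, and let H = W ∪ F (union of edge sets on {1,...,n}). If N_F is nonempty, then the size of the largest connected component of H satisfies C₁(H) ≤ C₁(W) + C₂(W)·(|N_F| − 1), where C₁(W) and C₂(W) denote the sizes of the largest and second largest connected components of W respectively. -/

import Mathlib

/-- The multiset of sizes of the connected components of a finite graph. -/
noncomputable def compSizes {V : Type*} [Fintype V] (G : SimpleGraph V) : Multiset ℕ :=
  (@Finset.univ G.ConnectedComponent (Fintype.ofFinite _)).val.map
    fun c => Nat.card c.supp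

/-- The size of the `i`-th largest connected component (1-indexed; 0 if fewer components). -/
noncomputable def compC {V : Type*} [Fintype V] (G : SimpleGraph V) (i : ℕ) : ℕ :=
  ((compSizes G).sort (· ≥ ·)).getD (i - 1) 0

private lemma sorted_getD_zero {s : Multiset ℕ} {a : ℕ} (ha : a ∈ s) :
    a ≤ (s.sort (· ≥ ·)).getD 0 0 := by
  have hmem : a ∈ s.sort (· ≥ ·) := by rwa [Multiset.mem_sort]
  have hs : (s.sort (· ≥ ·)).Pairwise (· ≥ ·) := Multiset.pairwise_sort _ _
  rcases hl : s.sort (· ≥ ·) with _ | ⟨h, t⟩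
  · rw [hl] at hmem; simp at hmem
  · rw [hl] at hmem hs
    rw [List.getD_cons_zero]
    rcases List.mem_cons.mp hmem with rfl | hmem'
    · exact le_refl _
    · exact (List.pairwise_cons.mp hs).1 a hmem'

private lemma sorted_getD_one {s : Multiset ℕ} {a : ℕ}
    (h2 : 2 ≤ s.countP (fun z => a ≤ z)) :
    a ≤ (s.sort (· ≥ ·)).getD 1 0 := by
  have hs : (s.sort (· ≥ ·)).Pairwise (· ≥ ·) := Multiset.pairwise_sort _ _
  have hc : 2 ≤ (s.sort (· ≥ ·)).countP (fun z => decide (a ≤ z)) := by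
    rw [← Multiset.coe_countP, Multiset.sort_eq]; exact h2
  rcases hl : s.sort (· ≥ ·) with _ | ⟨x, t⟩
  · rw [hl] at hc; simp at hc
  · rcases t with _ | ⟨y, t⟩
    · rw [hl] at hc
      simp only [List.countP_cons, List.countP_nil] at hc
      split at hc <;> omega
    · rw [hl] at hc hs
      rw [List.getD_cons_succ, List.getD_cons_zero]
      by_contra hya
      push_neg at hya
      have ht0 : t.countP (fun z => decide (a ≤ z)) = 0 := by
        rw [List.countP_eq_zero]
        intro z hz
        have : z ≤ y := (List.pairwise_cons.mp (List.pairwise_cons.mp hs).2).1 z hz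
        simp only [decide_eq_true_eq]
        omega
      have hy : ¬ (a ≤ y) := by omega
      rw [List.countP_cons, List.countP_cons, ht0] at hc
      simp only [decide_eq_true_eq] at hc
      rw [if_neg hy] at hc
      split at hc <;> omega

private lemma walk_hits {n : ℕ} {W F : SimpleGraph (Fin n)} {NF : Finset (Fin n)}
    (hF : ∀ i j, F.Adj i j → i ∈ NF ∧ j ∈ NF) :
    ∀ {v u : Fin n} (_ : (W ⊔ F).Walk v u),
      W.connectedComponentMk v ≠ W.connectedComponentMk u →
      ∃ x ∈ NF, W.connectedComponentMk x = W.connectedComponentMk v := by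
  intro v u p
  induction p with
  | nil => intro h; exact absurd rfl h
  | @cons v w u h p ih =>
    intro hne
    by_cases hw : W.connectedComponentMk v = W.connectedComponentMk w
    · obtain ⟨x, hx1, hx2⟩ := ih (hw ▸ hne)
      exact ⟨x, hx1, by rw [hx2, hw]⟩
    · rcases (SimpleGraph.sup_adj _ _ _ _).mp h with hWa | hFa
      · exact absurd (SimpleGraph.ConnectedComponent.sound hWa.reachable) hw
      · exact ⟨v, (hF _ _ hFa).1, rfl⟩

private lemma supp_card_eq {n : ℕ} (G : SimpleGraph (Fin n)) (c : G.ConnectedComponent)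
    [DecidablePred (fun v => G.connectedComponentMk v = c)] :
    Nat.card c.supp = (Finset.univ.filter (fun v => G.connectedComponentMk v = c)).card := by
  classical
  rw [Nat.card_coe_set_eq, Set.ncard_eq_toFinset_card']
  congr 1
  ext v
  simp only [Set.mem_toFinset, Finset.mem_filter, Finset.mem_univ, true_and]
  rfl

theorem stmt0 {n : ℕ} (W F : SimpleGraph (Fin n)) (NF : Finset (Fin n))
    (hF : ∀ i j, F.Adj i j → i ∈ NF ∧ j ∈ NF) (hNF : NF.Nonempty) :
    compC (W ⊔ F) 1 ≤ compC W 1 + compC W 2 * (NF.card - 1) := by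
  classical
  set H := W ⊔ F with hH
  rcases hl : (compSizes H).sort (· ≥ ·) with _ | ⟨a, t⟩
  · have h0 : compC H 1 = 0 := by simp [compC, hl]
    rw [h0]; exact Nat.zero_le _
  have ha : a ∈ compSizes H := by
    rw [← Multiset.mem_sort (· ≥ ·), hl]; exact List.mem_cons_self
  obtain ⟨d, _, hd⟩ := Multiset.mem_map.mp ha
  have hC1H : compC H 1 = a := by simp [compC, hl]
  haveI : Fintype W.ConnectedComponent := Fintype.ofFinite _
  set T : Finset W.ConnectedComponent := Finset.univ.filter (fun c => c.supp ⊆ d.supp) with hT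
  set cs : W.ConnectedComponent → Finset (Fin n) :=
    (fun c => Finset.univ.filter (fun v => W.connectedComponentMk v = c)) with hcsdef
  have hcs : ∀ c, (cs c).card = Nat.card c.supp := fun c => (supp_card_eq W c).symm
  -- membership characterization
  have hmemT : ∀ v : Fin n, W.connectedComponentMk v ∈ T ↔ H.connectedComponentMk v = d := by
    intro v
    simp only [hT, Finset.mem_filter, Finset.mem_univ, true_and]
    constructor
    · intro hsub
      have hv : v ∈ (W.connectedComponentMk v).supp := rfl
      exact hsub hv
    · intro hvd w hw
      have hww : W.connectedComponentMk w = W.connectedComponentMk v := hw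
      have hr : W.Reachable w v := SimpleGraph.ConnectedComponent.eq.mp hww
      have hrh : H.connectedComponentMk w = H.connectedComponentMk v :=
        SimpleGraph.ConnectedComponent.sound (hr.mono le_sup_left)
      show H.connectedComponentMk w = d
      rw [hrh, hvd]
  -- the support of d decomposes into W-components
  have hdcard : (Finset.univ.filter (fun v => H.connectedComponentMk v = d)) =
      T.biUnion cs := by
    ext v
    simp only [Finset.mem_filter, Finset.mem_univ, true_and, Finset.mem_biUnion, hcsdef]
    constructor
    · intro hvd
      exact ⟨W.connectedComponentMk v, (hmemT v).mpr hvd, rfl⟩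
    · rintro ⟨c, hcT, hvc⟩
      rw [← hvc] at hcT
      exact (hmemT v).mp hcT
  have hsum : Nat.card d.supp = ∑ c ∈ T, Nat.card c.supp := by
    rw [supp_card_eq H d, hdcard, Finset.card_biUnion]
    · exact Finset.sum_congr rfl (fun c _ => hcs c)
    · intro c hc c' hc' hne
      rw [Function.onFun, Finset.disjoint_left]
      intro v h1 h2
      simp only [hcsdef, Finset.mem_filter] at h1 h2
      exact hne (h1.2.symm.trans h2.2)
  -- size bounds
  have hC1 : ∀ c : W.ConnectedComponent, Nat.card c.supp ≤ compC W 1 := by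
    intro c
    have hmem : Nat.card c.supp ∈ compSizes W :=
      Multiset.mem_map.mpr ⟨c, Finset.mem_val.mpr (@Finset.mem_univ _ (Fintype.ofFinite _) c), rfl⟩
    exact sorted_getD_zero hmem
  have hC2 : ∀ c m : W.ConnectedComponent, c ≠ m →
      Nat.card c.supp ≤ Nat.card m.supp → Nat.card c.supp ≤ compC W 2 := by
    intro c m hne hle
    apply sorted_getD_one
    rw [compSizes, Multiset.countP_map, ← Finset.filter_val, ← Finset.card_def]
    apply Finset.one_lt_card.mpr
    exact ⟨c, Finset.mem_filter.mpr ⟨@Finset.mem_univ _ (Fintype.ofFinite _) c, le_refl _⟩,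
      m, Finset.mem_filter.mpr ⟨@Finset.mem_univ _ (Fintype.ofFinite _) m, hle⟩, hne⟩
  -- T.card ≤ NF.card when T has at least 2 elements
  have hTNF : 2 ≤ T.card → T.card ≤ NF.card := by
    intro h2
    have hx : ∀ c : W.ConnectedComponent, ∃ x, c ∈ T → (x ∈ NF ∧ W.connectedComponentMk x = c) := by
      intro c
      by_cases hc : c ∈ T
      · obtain ⟨v, hv0⟩ := c.exists_rep
        have hv : W.connectedComponentMk v = c := hv0
        obtain ⟨c', hc'T, hcc'⟩ := Finset.exists_mem_ne h2 c
        obtain ⟨u, hu0⟩ := c'.exists_rep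
        have hu : W.connectedComponentMk u = c' := hu0
        have hvd : H.connectedComponentMk v = d := (hmemT v).mp (by rw [hv]; exact hc)
        have hud : H.connectedComponentMk u = d := (hmemT u).mp (by rw [hu]; exact hc'T)
        have hr : H.Reachable v u := SimpleGraph.ConnectedComponent.eq.mp (hvd.trans hud.symm)
        obtain ⟨p⟩ := hr
        have hne : W.connectedComponentMk v ≠ W.connectedComponentMk u := by
          rw [hv, hu]; exact fun h => hcc' h.symm
        obtain ⟨x, hx1, hx2⟩ := walk_hits hF p hne
        exact ⟨x, fun _ => ⟨hx1, by rw [hx2, hv]⟩⟩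
      · exact ⟨hNF.choose, fun h => absurd h hc⟩
    choose g hg using hx
    exact Finset.card_le_card_of_injOn g (fun c hc => (hg c hc).1)
      (fun c hc c' hc' hgg => by
        rw [← (hg c (Finset.mem_coe.mp hc)).2, ← (hg c' (Finset.mem_coe.mp hc')).2, hgg])
  -- put everything together
  rw [hC1H, ← hd, hsum]
  rcases Finset.eq_empty_or_nonempty T with hTe | hTne
  · rw [hTe]; simp
  obtain ⟨m, hmT, hmax⟩ := T.exists_max_image (fun c => Nat.card c.supp) hTne
  rcases le_or_gt T.card 1 with h1 | h2
  · have hTs : T = {m} := by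
      apply Finset.eq_singleton_iff_unique_mem.mpr
      exact ⟨hmT, fun x hx => Finset.card_le_one.mp h1 x hx m hmT⟩
    rw [hTs, Finset.sum_singleton]
    exact le_trans (hC1 m) (Nat.le_add_right _ _)
  · have hTleNF := hTNF h2
    have herase : ∑ c ∈ T.erase m, Nat.card c.supp ≤ (T.erase m).card * compC W 2 := by
      calc ∑ c ∈ T.erase m, Nat.card c.supp
          ≤ ∑ _c ∈ T.erase m, compC W 2 :=
            Finset.sum_le_sum (fun c hc =>
              hC2 c m (Finset.ne_of_mem_erase hc) (hmax c (Finset.mem_of_mem_erase hc)))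
        _ = (T.erase m).card * compC W 2 := by rw [Finset.sum_const, smul_eq_mul]
    have hce : (T.erase m).card = T.card - 1 := Finset.card_erase_of_mem hmT
    calc ∑ c ∈ T, Nat.card c.supp
        = ∑ c ∈ T.erase m, Nat.card c.supp + Nat.card m.supp := (Finset.sum_erase_add T _ hmT).symm
      _ ≤ (T.card - 1) * compC W 2 + compC W 1 := by
          rw [← hce]; exact Nat.add_le_add herase (hC1 m)
      _ ≤ compC W 1 + compC W 2 * (NF.card - 1) := by
          have h3 : T.card - 1 ≤ NF.card - 1 := by omega
          have h4 := Nat.mul_le_mul_right (compC W 2) h3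
          rw [Nat.mul_comm (compC W 2)]
          omega
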